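/- For every m ∈ ℕ and every list L of natural numbers sorted in (weakly) descending order with all elements ≤ m, the list next_m L is also sorted in descending order with all elements ≤ m. -/

import Mathlib

def next (m : ℕ) : List ℕ → List ℕ
  | [] => [0]
  | h :: t =>
    if h < m then (h + 1) :: t
    else
      match next m t with
      | [] => []
      | x :: t' => x :: x :: t'

def lgen (m : ℕ) : ℕ → List ℕ
  | 0 => []
  | n + 1 => next m (lgen m n)

theorem stmt_11 (m : ℕ) (L : List ℕ) (hsorted : L.Pairwise (· ≥ ·))
    (hle : ∀ x ∈ L, x ≤ m) :
    (next m L).Pairwise (· ≥ ·) ∧ ∀ x ∈ next m L, x ≤ m := by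
  induction L with
  | nil =>
    simp [next]
  | cons h t ih =>
    rw [List.pairwise_cons] at hsorted
    obtain ⟨hh, hts⟩ := hsorted
    have hle' : ∀ x ∈ t, x ≤ m := fun x hx => hle x (List.mem_cons_of_mem _ hx)
    obtain ⟨ihs, ihle⟩ := ih hts hle'
    by_cases hc : h < m
    · simp [next, hc, List.pairwise_cons]
      refine ⟨⟨fun b hb => ?_, hts⟩, hle'⟩
      have := hh b hb
      omega
    · simp only [next, if_neg hc]
      rcases hnt : next m t with _ | ⟨x, t'⟩
      · simp
      · rw [hnt] at ihs ihle
        rw [List.pairwise_cons] at ihs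
        constructor
        · rw [List.pairwise_cons, List.pairwise_cons]
          exact ⟨fun b hb => by simp only [List.mem_cons] at hb; rcases hb with rfl | hb; exact le_refl _; exact ihs.1 b hb, ihs⟩
        · intro y hy
          simp only [List.mem_cons] at hy
          rcases hy with rfl | rfl | hy
          · exact ihle _ (by simp)
          · exact ihle _ (by simp)
          · exact ihle _ (by simp [hy])
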